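/- Let n ≥ 3 be an even integer, α = π/n, A(z) = -1 + e^{iα}(z+1), B(z) = 1 + e^{iα}(z-1). Then there is no integer j ≥ 0 with (B ∘ A)^j(1) = -1. -/

import Mathlib

open Complex Real

theorem even_wedge_q_never_maps_to_p (n : ℕ) (hn : 3 ≤ n) (heven : Even n) (α : ℝ)
    (hα : α = π / n)
    (A B : ℂ → ℂ)
    (hA : ∀ z, A z = -1 + Complex.exp (α * Complex.I) * (z + 1))
    (hB : ∀ z, B z = 1 + Complex.exp (α * Complex.I) * (z - 1)) :
    ¬ ∃ j : ℕ, (B ∘ A)^[j] 1 = -1 := by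
  rintro ⟨j, hj⟩
  set ω := Complex.exp (↑α * Complex.I) with hω
  have hf : ∀ z, (B ∘ A) z = ω ^ 2 * z + (1 - ω) ^ 2 := by
    intro z
    simp only [Function.comp_apply, hA, hB, ← hω]
    ring
  have key : ∀ m : ℕ, (1 + ω) * (B ∘ A)^[m] 1 = 2 * ω ^ (2 * m + 1) + (1 - ω) := by
    intro m
    induction m with
    | zero => simp; ring
    | succ k ih =>
      rw [Function.iterate_succ_apply', hf]
      have h1 : (1 + ω) * (ω ^ 2 * (B ∘ A)^[k] 1 + (1 - ω) ^ 2)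
          = ω ^ 2 * ((1 + ω) * (B ∘ A)^[k] 1) + (1 + ω) * (1 - ω) ^ 2 := by ring
      rw [h1, ih]
      ring
  have hpow : ω ^ (2 * j + 1) = -1 := by
    have h := key j
    rw [hj] at h
    linear_combination (-(1 : ℂ)/2) * h
  -- turn into exponential equation
  have hexp : Complex.exp ((((2 * j + 1 : ℕ) : ℂ) * α) * Complex.I) = -1 := by
    rw [mul_assoc, Complex.exp_nat_mul, ← hω, hpow]
  have hone : Complex.exp ((((2 * j + 1 : ℕ) : ℂ) * α) * Complex.I - ↑(π : ℝ) * Complex.I) = 1 := by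
    rw [Complex.exp_sub, hexp, Complex.exp_pi_mul_I]
    simp
  rw [Complex.exp_eq_one_iff] at hone
  obtain ⟨k, hk⟩ := hone
  have hI : ((((2 * j + 1 : ℕ) : ℝ) * α - π : ℝ) : ℂ) * Complex.I
      = (((2 * k * π : ℝ)) : ℂ) * Complex.I := by
    push_cast
    push_cast at hk
    linear_combination hk
  have hreal : ((2 * j + 1 : ℕ) : ℝ) * α - π = 2 * k * π := by
    have := mul_right_cancel₀ Complex.I_ne_zero hI
    exact_mod_cast this
  have hn0 : (n : ℝ) ≠ 0 := by positivity
  have hπ : (π : ℝ) ≠ 0 := Real.pi_ne_zero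
  rw [hα] at hreal
  have hr2 : ((2 * j + 1 : ℕ) : ℝ) * π = ((n : ℝ) + 2 * k * n) * π := by
    field_simp at hreal
    push_cast
    push_cast at hreal
    linear_combination π * hreal
  have hr3 : ((2 * j + 1 : ℕ) : ℝ) = ((n : ℤ) + 2 * k * n : ℤ) := by
    have := mul_right_cancel₀ hπ hr2
    push_cast
    push_cast at this
    linarith
  have hz : ((2 * j + 1 : ℕ) : ℤ) = (n : ℤ) + 2 * k * (n : ℤ) := by exact_mod_cast hr3
  obtain ⟨t, ht⟩ := heven
  have he : Even ((2 * j + 1 : ℕ) : ℤ) := by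
    rw [hz, ht]
    exact ⟨t + k * (t + t), by push_cast; ring⟩
  rw [Int.even_iff] at he
  omega
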